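/- Let s ∈ (3,4], let Z(s) = ∑_{k=1}^∞ k^{−s} (finite), and consider the power-law probability vector r_k = k^{−s}/Z(s) on X = ℕ_{≥1} with the Euclidean distance. Then: (i) the del Barrio–Giné–Matrán condition holds: ∑_{k=1}^∞ √( (∑_{j=1}^k r_j) · (∑_{j=k+1}^∞ r_j) ) < ∞; but (ii) the summability condition fails: ∑_{k=1}^∞ (k−1) · √(r_k) = ∞, i.e. the family ((k−1)√(k^{−s}/Z(s)))_{k≥1} is not summable. -/

import Mathlib

set_option maxHeartbeats 1000000

theorem statement12
    (s : ℝ) (hs3 : 3 < s) (hs4 : s ≤ 4) :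
    (Summable fun k : ℕ => ((k : ℝ) + 1) ^ (-s)) ∧
    (Summable fun k : ℕ =>
      Real.sqrt
        ((∑ j ∈ Finset.range (k + 1), ((j : ℝ) + 1) ^ (-s) / ∑' i : ℕ, ((i : ℝ) + 1) ^ (-s)) *
          ∑' j : ℕ, ((j : ℝ) + (k : ℝ) + 2) ^ (-s) / ∑' i : ℕ, ((i : ℝ) + 1) ^ (-s))) ∧
    (¬ Summable fun k : ℕ =>
      (k : ℝ) * Real.sqrt (((k : ℝ) + 1) ^ (-s) / ∑' i : ℕ, ((i : ℝ) + 1) ^ (-s))) := by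
  -- shifted p-series summability
  have shift : ∀ (c : ℕ) (p : ℝ), 1 < p →
      Summable (fun n : ℕ => ((n : ℝ) + (c : ℝ)) ^ (-p)) := by
    intro c p hp
    have h := (summable_nat_add_iff (f := fun n : ℕ => (n : ℝ) ^ (-p)) c).2
      (Real.summable_nat_rpow.2 (by linarith))
    exact h.congr (fun n => by push_cast; ring_nf)
  have hs1 : (1 : ℝ) < s := by linarith
  have hg : Summable (fun i : ℕ => ((i : ℝ) + 1) ^ (-s)) := by
    simpa using shift 1 s hs1
  set Z : ℝ := ∑' i : ℕ, ((i : ℝ) + 1) ^ (-s) with hZ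
  have hgpos : ∀ i : ℕ, 0 < ((i : ℝ) + 1) ^ (-s) :=
    fun i => Real.rpow_pos_of_pos (by positivity) _
  have hZpos : 0 < Z := Summable.tsum_pos hg (fun i => (hgpos i).le) 0 (hgpos 0)
  refine ⟨hg, ?_, ?_⟩
  · -- del Barrio–Giné–Matrán condition
    set α : ℝ := (s - 1) / 2 with hα
    set β : ℝ := (s + 1) / 2 with hβ
    have hα1 : 1 < α := by rw [hα]; linarith
    have hβ2 : 1 < β / 2 := by rw [hβ]; linarith
    have hCsum : Summable (fun j : ℕ => ((j : ℝ) + 2) ^ (-α)) := by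
      simpa using shift 2 α hα1
    set C : ℝ := ∑' j : ℕ, ((j : ℝ) + 2) ^ (-α) with hC
    have hC0 : 0 ≤ C := tsum_nonneg (fun j => (Real.rpow_pos_of_pos (by positivity) _).le)
    have hT : ∀ k : ℕ, Summable (fun j : ℕ => ((j : ℝ) + (k : ℝ) + 2) ^ (-s)) := by
      intro k
      have := shift (k + 2) s hs1
      exact this.congr (fun n => by push_cast; ring_nf)
    -- pointwise bound for tail terms
    have hpt : ∀ k j : ℕ, ((j : ℝ) + (k : ℝ) + 2) ^ (-s) ≤
        ((j : ℝ) + 2) ^ (-α) * ((k : ℝ) + 2) ^ (-β) := by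
      intro k j
      have hx0 : (0 : ℝ) < (j : ℝ) + (k : ℝ) + 2 := by positivity
      have hsplit : ((j : ℝ) + (k : ℝ) + 2) ^ (-s) =
          ((j : ℝ) + (k : ℝ) + 2) ^ (-α) * ((j : ℝ) + (k : ℝ) + 2) ^ (-β) := by
        rw [← Real.rpow_add hx0]
        congr 1
        rw [hα, hβ]; ring
      rw [hsplit]
      have h1 : ((j : ℝ) + (k : ℝ) + 2) ^ (-α) ≤ ((j : ℝ) + 2) ^ (-α) :=
        Real.rpow_le_rpow_of_nonpos (by positivity)
          (by linarith [Nat.cast_nonneg (α := ℝ) k]) (by linarith)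
      have h2 : ((j : ℝ) + (k : ℝ) + 2) ^ (-β) ≤ ((k : ℝ) + 2) ^ (-β) :=
        Real.rpow_le_rpow_of_nonpos (by positivity)
          (by linarith [Nat.cast_nonneg (α := ℝ) j]) (by linarith)
      exact mul_le_mul h1 h2 (Real.rpow_pos_of_pos hx0 _).le
        (Real.rpow_pos_of_pos (by positivity) _).le
    -- tail sum bound
    have htail : ∀ k : ℕ,
        (∑' j : ℕ, ((j : ℝ) + (k : ℝ) + 2) ^ (-s)) ≤ C * ((k : ℝ) + 2) ^ (-β) := by
      intro k
      have := Summable.tsum_le_tsum (hpt k) (hT k) (hCsum.mul_right (((k : ℝ) + 2) ^ (-β)))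
      rwa [tsum_mul_right] at this
    -- comparison with summable majorant
    refine Summable.of_nonneg_of_le (fun k => Real.sqrt_nonneg _)
      (f := fun k : ℕ => Real.sqrt (C / Z) * ((k : ℝ) + 2) ^ (-(β / 2))) ?_ ?_
    · intro k
      have hF1 : (∑ j ∈ Finset.range (k + 1), ((j : ℝ) + 1) ^ (-s) / Z) ≤ 1 := by
        rw [← Finset.sum_div, div_le_one hZpos]
        exact Summable.sum_le_tsum _ (fun i _ => (hgpos i).le) hg
      have hF0 : 0 ≤ (∑ j ∈ Finset.range (k + 1), ((j : ℝ) + 1) ^ (-s) / Z) :=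
        Finset.sum_nonneg (fun j _ => div_nonneg (hgpos j).le hZpos.le)
      have hT0 : 0 ≤ ∑' j : ℕ, ((j : ℝ) + (k : ℝ) + 2) ^ (-s) / Z :=
        tsum_nonneg (fun j => div_nonneg (Real.rpow_pos_of_pos (by positivity) _).le hZpos.le)
      have hTle : (∑' j : ℕ, ((j : ℝ) + (k : ℝ) + 2) ^ (-s) / Z) ≤
          C / Z * ((k : ℝ) + 2) ^ (-β) := by
        rw [tsum_div_const]
        rw [div_mul_eq_mul_div]
        exact (div_le_div_iff_of_pos_right hZpos).2 (htail k)
      calc Real.sqrt ((∑ j ∈ Finset.range (k + 1), ((j : ℝ) + 1) ^ (-s) / Z) *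
            ∑' j : ℕ, ((j : ℝ) + (k : ℝ) + 2) ^ (-s) / Z)
          ≤ Real.sqrt (C / Z * ((k : ℝ) + 2) ^ (-β)) := by
            apply Real.sqrt_le_sqrt
            calc (∑ j ∈ Finset.range (k + 1), ((j : ℝ) + 1) ^ (-s) / Z) *
                  (∑' j : ℕ, ((j : ℝ) + (k : ℝ) + 2) ^ (-s) / Z)
                ≤ 1 * (∑' j : ℕ, ((j : ℝ) + (k : ℝ) + 2) ^ (-s) / Z) :=
                  mul_le_mul_of_nonneg_right hF1 hT0
              _ = ∑' j : ℕ, ((j : ℝ) + (k : ℝ) + 2) ^ (-s) / Z := one_mul _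
              _ ≤ C / Z * ((k : ℝ) + 2) ^ (-β) := hTle
        _ = Real.sqrt (C / Z) * ((k : ℝ) + 2) ^ (-(β / 2)) := by
            rw [Real.sqrt_mul (div_nonneg hC0 hZpos.le)]
            congr 1
            rw [Real.sqrt_eq_rpow, ← Real.rpow_mul (by positivity)]
            congr 1; ring
    · exact (shift 2 (β / 2) hβ2).mul_left _
  · -- summability condition fails
    intro h
    have h2 : Summable (fun k : ℕ =>
        (((k : ℝ) + 1) * Real.sqrt (((k : ℝ) + 2) ^ (-s) / Z)) * (2 * Real.sqrt Z)) := by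
      have h1 := (summable_nat_add_iff 1).2 h
      have h1' : Summable (fun k : ℕ =>
          ((k : ℝ) + 1) * Real.sqrt (((k : ℝ) + 2) ^ (-s) / Z)) :=
        h1.congr (fun n => by push_cast; ring_nf)
      exact h1'.mul_right _
    have hns : ¬ Summable (fun k : ℕ => ((k : ℝ) + 2)⁻¹) := by
      intro hc
      have : Summable (fun n : ℕ => (n : ℝ)⁻¹) := by
        refine (summable_nat_add_iff 2).1 (hc.congr (fun n => by push_cast; ring_nf))
      exact Real.not_summable_natCast_inv this
    apply hns
    refine Summable.of_nonneg_of_le (fun k => by positivity) ?_ h2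
    intro k
    set x : ℝ := (k : ℝ) + 2 with hxdef
    have hx0 : (0 : ℝ) < x := by positivity
    have hx1 : (1 : ℝ) ≤ x := by rw [hxdef]; linarith [Nat.cast_nonneg (α := ℝ) k]
    have hsq : Real.sqrt (x ^ (-s) / Z) * Real.sqrt Z = Real.sqrt (x ^ (-s)) := by
      rw [← Real.sqrt_mul (by positivity), div_mul_cancel₀ _ (ne_of_gt hZpos)]
    have hsq2 : Real.sqrt (x ^ (-s)) = x ^ (-(s / 2)) := by
      rw [Real.sqrt_eq_rpow, ← Real.rpow_mul hx0.le]
      congr 1; ring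
    have hexp : x ^ (-(2 : ℝ)) ≤ x ^ (-(s / 2)) :=
      Real.rpow_le_rpow_of_exponent_le hx1 (by linarith)
    have hx2 : x ^ (-(2 : ℝ)) = (x ^ 2)⁻¹ := by
      rw [show (-(2 : ℝ)) = -((2 : ℕ) : ℝ) by norm_num, Real.rpow_neg hx0.le,
        Real.rpow_natCast]
    have e1 : x⁻¹ ≤ 2 * ((k : ℝ) + 1) * (x ^ 2)⁻¹ := by
      have h2x : x ≤ 2 * ((k : ℝ) + 1) := by rw [hxdef]; linarith [Nat.cast_nonneg (α := ℝ) k]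
      calc x⁻¹ = x * (x ^ 2)⁻¹ := by field_simp
        _ ≤ 2 * ((k : ℝ) + 1) * (x ^ 2)⁻¹ :=
          mul_le_mul_of_nonneg_right h2x (by positivity)
    calc x⁻¹ ≤ 2 * ((k : ℝ) + 1) * (x ^ 2)⁻¹ := e1
      _ ≤ 2 * ((k : ℝ) + 1) * x ^ (-(s / 2)) := by
          rw [← hx2]
          exact mul_le_mul_of_nonneg_left hexp (by positivity)
      _ = (((k : ℝ) + 1) * Real.sqrt (x ^ (-s) / Z)) * (2 * Real.sqrt Z) := by
          rw [show (((k : ℝ) + 1) * Real.sqrt (x ^ (-s) / Z)) * (2 * Real.sqrt Z)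
              = 2 * ((k : ℝ) + 1) * (Real.sqrt (x ^ (-s) / Z) * Real.sqrt Z) by ring,
            hsq, hsq2]
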